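/- Every f ∈ G_n with A(f) = 0 can be written as a product of at most 4 involutions of G_n. -/

import Mathlib

abbrev Circle1 : Type := AddCircle (1 : ℝ)

abbrev Gn (n : ℕ) : Type := (Fin n → Circle1) × Equiv.Perm (Fin n)

namespace Gn
variable {n : ℕ}

noncomputable instance : Mul (Gn n) := ⟨fun f g => ⟨fun j => g.1 j + f.1 (g.2 j), f.2 * g.2⟩⟩
noncomputable instance : One (Gn n) := ⟨⟨fun _ => 0, 1⟩⟩
noncomputable instance : Inv (Gn n) := ⟨fun f => ⟨fun j => -f.1 (f.2⁻¹ j), f.2⁻¹⟩⟩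

noncomputable instance : Group (Gn n) where
  mul_assoc f g h := Prod.ext (funext fun j => (add_assoc _ _ _).symm) rfl
  one_mul f := Prod.ext (funext fun j => add_zero _) (one_mul _)
  mul_one f := Prod.ext (funext fun j => zero_add _) (mul_one _)
  inv_mul_cancel f := Prod.ext
    (funext fun j => show f.1 j + -f.1 (f.2⁻¹ (f.2 j)) = 0 by simp)
    (inv_mul_cancel _)

@[simp] lemma mul_fst (f g : Gn n) (j : Fin n) : (f * g).1 j = g.1 j + f.1 (g.2 j) := rfl
@[simp] lemma mul_snd (f g : Gn n) : (f * g).2 = f.2 * g.2 := rfl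
@[simp] lemma one_fst (j : Fin n) : (1 : Gn n).1 j = 0 := rfl
@[simp] lemma one_snd : (1 : Gn n).2 = 1 := rfl
@[simp] lemma inv_fst (f : Gn n) (j : Fin n) : (f⁻¹).1 j = -f.1 (f.2⁻¹ j) := rfl
@[simp] lemma inv_snd (f : Gn n) : (f⁻¹).2 = f.2⁻¹ := rfl


/-- The map `A : G_n → 𝕋`, `A(α, σ) = 2(α_1 + ⋯ + α_n)` (it is a group homomorphism). -/
noncomputable def Afun (f : Gn n) : Circle1 := 2 • ∑ j, f.1 j

end Gn

section Aux

open Equiv Equiv.Perm Finset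

lemma conj_invol {G : Type*} [Group G] (u x : G) (hx : x * x = 1) :
    (u * x * u⁻¹) * (u * x * u⁻¹) = 1 := by
  have h : (u * x * u⁻¹) * (u * x * u⁻¹) = u * (x * x) * u⁻¹ := by group
  rw [h, hx, mul_one, mul_inv_cancel]

open Fin.CommRing in
lemma rotate_two_invol (k : ℕ) :
    ∃ a b : Perm (Fin (k+2)), a*a = 1 ∧ b*b = 1 ∧ a*b = finRotate (k+2) := by
  refine ⟨Function.Involutive.toPerm (fun j => -j) (fun j => by simp),
    Function.Involutive.toPerm (fun j => -(j+1)) (fun j => by ring_nf), ?_, ?_, ?_⟩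
  · exact Equiv.ext fun j => by simp [Function.Involutive.toPerm]
  · exact Equiv.ext fun j => by simp [Function.Involutive.toPerm]
  · exact Equiv.ext fun j => by
      simp [Function.Involutive.toPerm, finRotate_succ_apply]

def blockEquiv {n m : ℕ} (h : m ≤ n) : Fin m ≃ {x : Fin n // x.val < m} where
  toFun i := ⟨⟨i.1, i.2.trans_le h⟩, i.2⟩
  invFun x := ⟨x.1.1, x.2⟩
  left_inv _ := rfl
  right_inv _ := rfl

lemma cycle_two_invol {n : ℕ} {σ : Perm (Fin n)} (hσ : σ.IsCycle) :
    ∃ a b : Perm (Fin n), a*a = 1 ∧ b*b = 1 ∧ a*b = σ ∧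
      a.support ⊆ σ.support ∧ b.support ⊆ σ.support := by
  obtain ⟨k, hk⟩ : ∃ k, #σ.support = k + 2 := by
    have := hσ.two_le_card_support
    exact ⟨#σ.support - 2, by omega⟩
  have hmn : k + 2 ≤ n := by
    calc k + 2 = #σ.support := hk.symm
    _ ≤ (Finset.univ : Finset (Fin n)).card := card_le_univ _
    _ = n := by simp
  set e := blockEquiv hmn
  set Θ : Perm (Fin n) := (finRotate (k+2)).extendDomain e with hΘ
  have hΘc : Θ.IsCycle := isCycle_finRotate.extendDomain e
  have hcard : #Θ.support = k + 2 := by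
    rw [hΘ, card_support_extend_domain, support_finRotate, card_univ, Fintype.card_fin]
  obtain ⟨π, hπ⟩ := isConj_iff.mp (hΘc.isConj hσ (by rw [hcard, hk]))
  obtain ⟨a₀, b₀, ha₀, hb₀, hab₀⟩ := rotate_two_invol k
  have hsup : ∀ x : Perm (Fin (k+2)),
      (π * x.extendDomain e * π⁻¹).support ⊆ σ.support := by
    intro x
    rw [← hπ, support_conj, support_conj]
    apply Finset.map_subset_map.mpr
    rw [support_extend_domain, hΘ, support_extend_domain]
    apply Finset.map_subset_map.mpr
    rw [support_finRotate]
    exact Finset.subset_univ _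
  refine ⟨π * a₀.extendDomain e * π⁻¹, π * b₀.extendDomain e * π⁻¹, ?_, ?_, ?_, hsup a₀, hsup b₀⟩
  · exact conj_invol _ _ (by rw [extendDomain_mul, ha₀, extendDomain_one])
  · exact conj_invol _ _ (by rw [extendDomain_mul, hb₀, extendDomain_one])
  · have h2 : (π * a₀.extendDomain e * π⁻¹) * (π * b₀.extendDomain e * π⁻¹)
        = π * (a₀.extendDomain e * b₀.extendDomain e) * π⁻¹ := by group
    rw [h2, extendDomain_mul, hab₀, ← hΘ, hπ]

lemma perm_two_invol {n : ℕ} (σ : Perm (Fin n)) :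
    ∃ a b : Perm (Fin n), a*a = 1 ∧ b*b = 1 ∧ a*b = σ := by
  have H : ∀ σ : Perm (Fin n), ∃ a b : Perm (Fin n), a*a = 1 ∧ b*b = 1 ∧ a*b = σ ∧
      a.support ⊆ σ.support ∧ b.support ⊆ σ.support := by
    intro σ
    induction σ using cycle_induction_on with
    | base_one => exact ⟨1, 1, by simp, by simp, by simp, by simp, by simp⟩
    | base_cycles σ hσ => exact cycle_two_invol hσ
    | induction_disjoint σ τ hd _ ihσ ihτ =>
      obtain ⟨a, b, ha, hb, hab, hsa, hsb⟩ := ihσ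
      obtain ⟨a', b', ha', hb', hab', hsa', hsb'⟩ := ihτ
      have hcomm : ∀ x y : Perm (Fin n), x.support ⊆ σ.support → y.support ⊆ τ.support →
          Commute x y := by
        intro x y hx hy
        exact Equiv.Perm.Disjoint.commute <| disjoint_iff_disjoint_support.mpr <|
          Finset.disjoint_of_subset_left hx <| Finset.disjoint_of_subset_right hy <|
          disjoint_iff_disjoint_support.mp hd
      have hsupmul : (σ * τ).support = σ.support ∪ τ.support := hd.support_mul
      refine ⟨a * a', b * b', ?_, ?_, ?_, ?_, ?_⟩
      · rw [(hcomm a a' hsa hsa').symm.mul_mul_mul_comm, ha, ha', one_mul]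
      · rw [(hcomm b b' hsb hsb').symm.mul_mul_mul_comm, hb, hb', one_mul]
      · rw [(hcomm b a' hsb hsa').symm.mul_mul_mul_comm, hab, hab']
      · refine (support_mul_le _ _).trans ?_
        rw [hsupmul]; exact Finset.union_subset_union hsa hsa'
      · refine (support_mul_le _ _).trans ?_
        rw [hsupmul]; exact Finset.union_subset_union hsb hsb'
  obtain ⟨a, b, h1, h2, h3, _, _⟩ := H σ
  exact ⟨a, b, h1, h2, h3⟩

end Aux

open Equiv Equiv.Perm Finset Fin.CommRing Fin.NatCast in
/-- Every `f ∈ G_n` with `A(f) = 0` is a product of at most `4` involutions of `G_n`. -/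
theorem stmt10 {n : ℕ} (f : Gn n) (hf : Gn.Afun f = 0) :
    ∃ l : List (Gn n), l.length ≤ 4 ∧ (∀ T ∈ l, T * T = 1) ∧ l.prod = f := by
  rcases n with _ | m
  · refine ⟨[], by simp, by simp, ?_⟩
    exact Prod.ext (funext fun j => j.elim0) (Equiv.ext fun j => j.elim0)
  set α : Fin (m+1) → Circle1 := f.1 with hα
  set S : Circle1 := ∑ j, α j with hSdef
  have hS2 : 2 • S = 0 := hf
  obtain ⟨x, hx⟩ : ∃ x : ℝ, (x : Circle1) = S := QuotientAddGroup.mk_surjective S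
  set κ : Circle1 := ((x / (m+1) : ℝ) : Circle1) with hκdef
  have hκ : (m+1) • κ = S := by
    rw [hκdef, ← AddCircle.coe_nsmul, ← hx]
    congr 1
    rw [nsmul_eq_mul]
    field_simp
    push_cast; ring
  have h2n : (2 * (m+1)) • κ = 0 := by
    rw [show 2*(m+1) = (m+1)*2 by ring, mul_nsmul, hκ, hS2]
  have key : ∀ s t : ℕ, s % (m+1) = t % (m+1) → (2*s) • κ = (2*t) • κ := by
    have h0 : ∀ s : ℕ, (2*s) • κ = (2*(s % (m+1))) • κ := by
      intro s
      conv_lhs => rw [← Nat.div_add_mod s (m+1)]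
      rw [Nat.mul_add, add_nsmul, show 2*((m+1)*(s/(m+1))) = (2*(m+1))*(s/(m+1)) by ring,
        mul_nsmul, h2n, smul_zero, zero_add]
    intro s t h
    rw [h0 s, h0 t, h]
  have keyF : ∀ u v : Fin (m+1),
      ((2 * u.val) • κ) + ((2 * v.val) • κ) = (2 * (u+v).val) • κ := by
    intro u v
    rw [← add_nsmul, ← Nat.mul_add]
    refine key _ _ ?_
    rw [Fin.val_add]
    exact (Nat.mod_mod_of_dvd _ dvd_rfl).symm
  set c : Perm (Fin (m+1)) := Equiv.addRight 1 with hc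
  set r : Perm (Fin (m+1)) := Function.Involutive.toPerm (fun j => -j) (fun j => neg_neg j)
    with hr
  set μ : Fin (m+1) → Circle1 := fun j => -((2 * j.val) • κ) with hμ
  set X : Gn (m+1) := (μ, r) with hX
  set B : Gn (m+1) := ((fun _ => κ), c) with hB
  -- X is an involution
  have hXX : X * X = 1 := by
    apply Prod.ext
    · funext j
      show μ j + μ (-j) = 0
      have e1 := keyF j (-j)
      rw [add_neg_cancel] at e1
      simp only [Fin.val_zero, Nat.mul_zero, zero_nsmul] at e1
      show -((2 * j.val) • κ) + -((2 * ((-j : Fin (m+1))).val) • κ) = 0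
      rw [← neg_add, e1, neg_zero]
    · show r * r = 1
      exact Equiv.ext fun j => by simp [hr, Function.Involutive.toPerm]
  -- X conjugates B to its inverse
  have hXBX : X * B * X = B⁻¹ := by
    apply Prod.ext
    · funext j
      show μ j + (κ + μ (-j + 1)) = -κ
      have e1 := keyF j (-j + 1)
      rw [show j + (-j + 1) = 1 by ring] at e1
      have e2 : (2 * ((1 : Fin (m+1))).val) • κ = (2 * 1) • κ := by
        refine key _ _ ?_
        rw [Fin.val_one']
        exact Nat.mod_mod_of_dvd _ dvd_rfl
      have e3 : μ j + μ (-j + 1) = -(κ + κ) := by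
        show -((2 * j.val) • κ) + -((2 * ((-j + 1 : Fin (m+1))).val) • κ) = -(κ + κ)
        rw [← neg_add, e1, e2]
        norm_num [two_nsmul]
      calc μ j + (κ + μ (-j + 1)) = (μ j + μ (-j + 1)) + κ := by abel
        _ = -(κ + κ) + κ := by rw [e3]
        _ = -κ := by abel
    · show r * c * r = B.2⁻¹
      have : B.2 = c := rfl
      rw [this, eq_inv_iff_mul_eq_one]
      refine Equiv.ext fun j => ?_
      show -(-(j + 1) + 1) = j
      ring
  have hXB2 : (X * B) * (X * B) = 1 := by
    rw [← mul_assoc, hXBX, inv_mul_cancel]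
  have hXXB : X * (X * B) = B := by
    rw [← mul_assoc, hXX, one_mul]
  -- the conjugating translation g
  set t : Fin (m+1) → Circle1 :=
    fun k => (∑ i ∈ Finset.range k.val, α ((i : ℕ) : Fin (m+1))) - (k.val • κ) with htdef
  set g : Gn (m+1) := (t, 1) with hg
  have hSr : (∑ i ∈ Finset.range (m+1), α ((i : ℕ) : Fin (m+1))) = S := by
    rw [hSdef, ← Fin.sum_univ_eq_sum_range (fun i => α ((i : ℕ) : Fin (m+1))) (m+1)]
    exact Finset.sum_congr rfl fun j _ => by rw [Fin.cast_val_eq_self]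
  have hcast : ((m : ℕ) : Fin (m+1)) = Fin.last m := by
    apply Fin.ext
    rw [Fin.val_last, Fin.val_natCast]
    exact Nat.mod_eq_of_lt (by omega)
  have ht : ∀ j : Fin (m+1), t (j + 1) = t j + α j - κ := by
    intro j
    rcases eq_or_ne j (Fin.last m) with hj | hj
    · have hj0 : j + 1 = 0 := by rw [hj]; exact Fin.last_add_one m
      have h1 : (∑ i ∈ Finset.range m, α ((i : ℕ) : Fin (m+1))) + α (Fin.last m) = S := by
        rw [← hSr, Finset.sum_range_succ, hcast]
      have h2 : (∑ i ∈ Finset.range m, α ((i : ℕ) : Fin (m+1))) + α (Fin.last m)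
          = m • κ + κ := by
        rw [h1, ← succ_nsmul κ m, hκ]
      rw [hj0, hj]
      show (∑ i ∈ Finset.range (0 : Fin (m+1)).val, α ((i : ℕ) : Fin (m+1)))
          - ((0 : Fin (m+1)).val • κ)
        = ((∑ i ∈ Finset.range (Fin.last m).val, α ((i : ℕ) : Fin (m+1)))
          - ((Fin.last m).val • κ)) + α (Fin.last m) - κ
      rw [Fin.val_zero, Fin.val_last]
      simp only [Finset.range_zero, Finset.sum_empty, zero_nsmul, sub_zero]
      have h3 : (∑ i ∈ Finset.range m, α ((i : ℕ) : Fin (m+1))) - m • κ + α (Fin.last m) - κ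
          = ((∑ i ∈ Finset.range m, α ((i : ℕ) : Fin (m+1))) + α (Fin.last m))
            - (m • κ + κ) := by abel
      rw [h3, h2, sub_self]
    · have hlt : j < Fin.last m := lt_of_le_of_ne (Fin.le_last j) hj
      have hval : (j + 1).val = j.val + 1 := Fin.val_add_one_of_lt hlt
      show (∑ i ∈ Finset.range (j+1).val, α ((i : ℕ) : Fin (m+1))) - ((j+1).val • κ)
        = ((∑ i ∈ Finset.range j.val, α ((i : ℕ) : Fin (m+1))) - (j.val • κ)) + α j - κ
      rw [hval, Finset.sum_range_succ, succ_nsmul, Fin.cast_val_eq_self]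
      abel
  have hgBg : g * B * g⁻¹ = (α, c) := by
    apply Prod.ext
    · funext j
      show -t j + (κ + t (j + 1)) = α j
      rw [ht j]
      abel
    · show (1 : Perm (Fin (m+1))) * c * (1 : Perm (Fin (m+1)))⁻¹ = c
      simp
  -- the remaining permutation part
  set ρ : Perm (Fin (m+1)) := c⁻¹ * f.2 with hρ
  obtain ⟨τ₁, τ₂, hτ₁, hτ₂, hτρ⟩ := perm_two_invol ρ
  set hG : Gn (m+1) := (α, 1) with hhG
  set pp : Perm (Fin (m+1)) → Gn (m+1) := fun τ => ((fun _ => 0), τ) with hpp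
  have hppmul : ∀ τ τ' : Perm (Fin (m+1)), pp τ * pp τ' = pp (τ * τ') := by
    intro τ τ'
    exact Prod.ext (funext fun j => by show (0 : Circle1) + 0 = 0; simp) rfl
  have hpp1 : pp 1 = 1 := rfl
  have hT3 : (hG⁻¹ * pp τ₁ * hG) * (hG⁻¹ * pp τ₁ * hG) = 1 := by
    have h := conj_invol hG⁻¹ (pp τ₁) (by rw [hppmul, hτ₁, hpp1])
    rwa [inv_inv] at h
  have hT4 : (hG⁻¹ * pp τ₂ * hG) * (hG⁻¹ * pp τ₂ * hG) = 1 := by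
    have h := conj_invol hG⁻¹ (pp τ₂) (by rw [hppmul, hτ₂, hpp1])
    rwa [inv_inv] at h
  have hD : hG⁻¹ * pp ρ * hG = ((fun j => α j - α (ρ j)), ρ) := by
    apply Prod.ext
    · funext j
      show α j + ((0 : Circle1) + -α (ρ j)) = α j - α (ρ j)
      abel
    · show (1 : Perm (Fin (m+1)))⁻¹ * ρ * 1 = ρ
      simp
  refine ⟨[g * X * g⁻¹, g * (X * B) * g⁻¹, hG⁻¹ * pp τ₁ * hG, hG⁻¹ * pp τ₂ * hG],
    by simp, ?_, ?_⟩
  · intro T hT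
    simp only [List.mem_cons, List.not_mem_nil, or_false] at hT
    rcases hT with h | h | h | h
    · rw [h]; exact conj_invol g X hXX
    · rw [h]; exact conj_invol g (X * B) hXB2
    · rw [h]; exact hT3
    · rw [h]; exact hT4
  · rw [List.prod_cons, List.prod_cons, List.prod_cons, List.prod_cons, List.prod_nil, mul_one]
    have e12 : (g * X * g⁻¹) * (g * (X * B) * g⁻¹) = (α, c) := by
      have h : (g * X * g⁻¹) * (g * (X * B) * g⁻¹) = g * (X * (X * B)) * g⁻¹ := by group
      rw [h, hXXB, hgBg]
    have e34 : (hG⁻¹ * pp τ₁ * hG) * (hG⁻¹ * pp τ₂ * hG) = ((fun j => α j - α (ρ j)), ρ) := by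
      have h : (hG⁻¹ * pp τ₁ * hG) * (hG⁻¹ * pp τ₂ * hG) = hG⁻¹ * (pp τ₁ * pp τ₂) * hG := by
        group
      rw [h, hppmul, hτρ, hD]
    calc (g * X * g⁻¹) * ((g * (X * B) * g⁻¹) *
          ((hG⁻¹ * pp τ₁ * hG) * (hG⁻¹ * pp τ₂ * hG)))
        = ((g * X * g⁻¹) * (g * (X * B) * g⁻¹)) *
          ((hG⁻¹ * pp τ₁ * hG) * (hG⁻¹ * pp τ₂ * hG)) := by group
      _ = (α, c) * ((fun j => α j - α (ρ j)), ρ) := by rw [e12, e34]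
      _ = f := by
          apply Prod.ext
          · funext j
            show (α j - α (ρ j)) + α (ρ j) = α j
            abel
          · show c * ρ = f.2
            rw [hρ, mul_inv_cancel_left]
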